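/- Let μ = Σ_{j=1}^m W_j δ_{x_j} be a finitely supported matrix probability measure that is n-definite, and suppose the monic orthogonal polynomial Π_{n−1} for μ satisfies rank ⟨Π_{n−1}, Π_{n−1}⟩_μ = k − ℓ with 0 ≤ ℓ < k. Let P_0,…,P_{n−2} be the unique normalized orthonormal polynomials for μ (with B_j = ⟨P_{j+1}, xP_j(x)⟩_μ upper triangular with positive diagonal for j ≤ n−3, and conventions P_{−1} ≡ 0, B_{−1} = I_k). Set A_{n−2} := ⟨P_{n−2}, x P_{n−2}(x)⟩_μ and P(x) := x P_{n−2}(x) − P_{n−2}(x) A_{n−2} − P_{n−3}(x) B_{n−3}^*. Then: (i) there is a unique B_{n−2} ∈ ℂ^{(k−ℓ)×k} in row echelon form with positive pivots such that ⟨P, P⟩_μ = B_{n−2}^* B_{n−2}; and (ii) the polynomial P_{n−1}(x) := P(x) B_{n−2}^* (B_{n−2} B_{n−2}^*)^{−1}, with coefficients in ℂ^{k×(k−ℓ)}, satisfies ⟨P_{n−1}, P_j⟩_μ = 0 for all j < n−1, ⟨P_{n−1}, P_{n−1}⟩_μ = I_{k−ℓ}, and ⟨P_{n−1}, x P_{n−2}(x)⟩_μ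 = B_{n−2}. -/

import Mathlib

open Matrix Polynomial
open scoped ComplexOrder

noncomputable section

/-- The right quasi-inner product `⟨P,Q⟩_μ = Σ_j P(x_j)^* W_j Q(x_j)` of matrix
polynomials with respect to the finitely supported matrix measure `μ = Σ_j W_j δ_{x_j}`. -/
def innerMu {k m : ℕ} (x : Fin m → ℝ) (W : Fin m → Matrix (Fin k) (Fin k) ℂ)
    (P Q : Polynomial (Matrix (Fin k) (Fin k) ℂ)) : Matrix (Fin k) (Fin k) ℂ :=
  ∑ j, (P.eval ((x j : ℂ) • (1 : Matrix (Fin k) (Fin k) ℂ)))ᴴ * W j *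
      Q.eval ((x j : ℂ) • (1 : Matrix (Fin k) (Fin k) ℂ))

/-- `μ` is `n`-definite: `⟨P,P⟩_μ ≠ 0` for every nonzero matrix polynomial `P` of
degree at most `n - 2`. -/
def NDefinite {k m : ℕ} (n : ℕ) (x : Fin m → ℝ)
    (W : Fin m → Matrix (Fin k) (Fin k) ℂ) : Prop :=
  ∀ P : Polynomial (Matrix (Fin k) (Fin k) ℂ), P ≠ 0 →
    (P.natDegree : ℤ) ≤ (n : ℤ) - 2 → innerMu x W P P ≠ 0

/-- `Pm` is a monic orthogonal polynomial of degree `j` for `μ`: it is monic of degree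
`j` and `⟨Q, Pm⟩_μ = 0` for every matrix polynomial `Q` of degree less than `j`. -/
def IsMonicOrth {k m : ℕ} (x : Fin m → ℝ) (W : Fin m → Matrix (Fin k) (Fin k) ℂ)
    (j : ℕ) (Pm : Polynomial (Matrix (Fin k) (Fin k) ℂ)) : Prop :=
  Pm.Monic ∧ Pm.natDegree = j ∧
    ∀ Q : Polynomial (Matrix (Fin k) (Fin k) ℂ), Q.natDegree < j → innerMu x W Q Pm = 0

/-- A square matrix is upper triangular with (real) positive diagonal entries. -/
def UpperTriPosDiag {k : ℕ} (M : Matrix (Fin k) (Fin k) ℂ) : Prop :=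
  ∀ r c : Fin k, ((c : ℕ) < (r : ℕ) → M r c = 0) ∧ (r = c → 0 < (M r c).re ∧ (M r c).im = 0)

/-- A matrix is in row echelon form with positive pivots. -/
def RowEchelonPosPivots {r m : ℕ} (R : Matrix (Fin r) (Fin m) ℂ) : Prop :=
  ∃ p : Fin r → Fin m, StrictMono p ∧
    ∀ i : Fin r, (0 < (R i (p i)).re ∧ (R i (p i)).im = 0) ∧
      ∀ j : Fin m, (j : ℕ) < (p i : ℕ) → R i j = 0

/-- The quasi-inner product `⟨F,G⟩_μ := Σ_j F(x_j)^* W_j G(x_j)` for (possibly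
rectangular) matrix-valued functions on `ℝ`. -/
def innerFun {k m a b : ℕ} (x : Fin m → ℝ) (W : Fin m → Matrix (Fin k) (Fin k) ℂ)
    (F : ℝ → Matrix (Fin k) (Fin a) ℂ) (G : ℝ → Matrix (Fin k) (Fin b) ℂ) :
    Matrix (Fin a) (Fin b) ℂ :=
  ∑ j, (F (x j))ᴴ * W j * G (x j)

/-- Evaluation of a matrix polynomial as a matrix-valued function on `ℝ`. -/
def pev {k : ℕ} (P : Polynomial (Matrix (Fin k) (Fin k) ℂ)) :
    ℝ → Matrix (Fin k) (Fin k) ℂ :=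
  fun t => P.eval ((t : ℂ) • (1 : Matrix (Fin k) (Fin k) ℂ))

open Matrix Polynomial
open scoped ComplexOrder
noncomputable section

namespace MyAux
variable {k : ℕ}

lemma commute_scalar (t : ℂ) (M : Matrix (Fin k) (Fin k) ℂ) :
    Commute M (t • (1 : Matrix (Fin k) (Fin k) ℂ)) :=
  (Commute.one_right M).smul_right t

lemma ev_mul (t : ℂ) (P Q : Polynomial (Matrix (Fin k) (Fin k) ℂ)) :
    (P * Q).eval (t • (1 : Matrix (Fin k) (Fin k) ℂ)) =
      P.eval (t • 1) * Q.eval (t • 1) := by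
  simp only [Polynomial.eval]
  exact eval₂_mul_noncomm _ _ (fun i => commute_scalar t _)

lemma ev_X_mul (t : ℂ) (Q : Polynomial (Matrix (Fin k) (Fin k) ℂ)) :
    (X * Q).eval (t • (1 : Matrix (Fin k) (Fin k) ℂ)) =
      t • (Q.eval (t • 1)) := by
  rw [ev_mul, eval_X, smul_mul_assoc, one_mul]

lemma ev_mul_C (t : ℂ) (Q : Polynomial (Matrix (Fin k) (Fin k) ℂ))
    (M : Matrix (Fin k) (Fin k) ℂ) :
    (Q * Polynomial.C M).eval (t • (1 : Matrix (Fin k) (Fin k) ℂ)) =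
      Q.eval (t • 1) * M := by
  rw [ev_mul, eval_C]

end MyAux

section inner2
open MyAux
variable {k m : ℕ} (x : Fin m → ℝ) (W : Fin m → Matrix (Fin k) (Fin k) ℂ)

namespace MyAux

lemma innerMu_mul_C_right (P Q : Polynomial (Matrix (Fin k) (Fin k) ℂ)) (M) :
    innerMu x W P (Q * Polynomial.C M) = innerMu x W P Q * M := by
  simp only [innerMu, ev_mul_C, Finset.sum_mul, mul_assoc]

lemma innerMu_mul_C_left (P Q : Polynomial (Matrix (Fin k) (Fin k) ℂ)) (M) :
    innerMu x W (P * Polynomial.C M) Q = Mᴴ * innerMu x W P Q := by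
  simp only [innerMu, ev_mul_C, conjTranspose_mul, Finset.mul_sum, mul_assoc]

lemma innerMu_add_right (P Q R : Polynomial (Matrix (Fin k) (Fin k) ℂ)) :
    innerMu x W P (Q + R) = innerMu x W P Q + innerMu x W P R := by
  simp only [innerMu, eval_add, mul_add, Finset.sum_add_distrib]

lemma innerMu_sub_right (P Q R : Polynomial (Matrix (Fin k) (Fin k) ℂ)) :
    innerMu x W P (Q - R) = innerMu x W P Q - innerMu x W P R := by
  simp only [innerMu, eval_sub, mul_sub, Finset.sum_sub_distrib]

lemma innerMu_sub_left (P Q R : Polynomial (Matrix (Fin k) (Fin k) ℂ)) :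
    innerMu x W (P - Q) R = innerMu x W P R - innerMu x W Q R := by
  simp only [innerMu, eval_sub, conjTranspose_sub, sub_mul, Finset.sum_sub_distrib]

lemma innerMu_zero_right (P : Polynomial (Matrix (Fin k) (Fin k) ℂ)) :
    innerMu x W P 0 = 0 := by
  simp [innerMu]

lemma innerMu_zero_left (P : Polynomial (Matrix (Fin k) (Fin k) ℂ)) :
    innerMu x W 0 P = 0 := by
  simp [innerMu]

lemma innerMu_sum_right {ι : Type*} (s : Finset ι) (P : Polynomial (Matrix (Fin k) (Fin k) ℂ))
    (Q : ι → Polynomial (Matrix (Fin k) (Fin k) ℂ)) :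
    innerMu x W P (∑ i ∈ s, Q i) = ∑ i ∈ s, innerMu x W P (Q i) := by
  classical
  induction s using Finset.induction_on with
  | empty => simp [innerMu_zero_right]
  | insert _ _ h ih => rw [Finset.sum_insert h, Finset.sum_insert h, innerMu_add_right, ih]

lemma innerMu_conj (hW : ∀ j, (W j).PosSemidef)
    (P Q : Polynomial (Matrix (Fin k) (Fin k) ℂ)) :
    (innerMu x W P Q)ᴴ = innerMu x W Q P := by
  simp only [innerMu, conjTranspose_sum, conjTranspose_mul, conjTranspose_conjTranspose]
  refine Finset.sum_congr rfl fun j _ => ?_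
  rw [(hW j).1.eq, mul_assoc]

lemma innerMu_X_comm (hW : ∀ j, (W j).PosSemidef)
    (P Q : Polynomial (Matrix (Fin k) (Fin k) ℂ)) :
    innerMu x W P (X * Q) = innerMu x W (X * P) Q := by
  simp only [innerMu, ev_X_mul]
  refine Finset.sum_congr rfl fun j _ => ?_
  rw [conjTranspose_smul, Complex.star_def, Complex.conj_ofReal]
  rw [Matrix.mul_smul, Matrix.smul_mul, Matrix.smul_mul]

end MyAux
end inner2

namespace MyAux
variable {k m : ℕ} {n : ℕ} (x : Fin m → ℝ) (W : Fin m → Matrix (Fin k) (Fin k) ℂ)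
variable (P : ℕ → Polynomial (Matrix (Fin k) (Fin k) ℂ))

lemma expansion_coeff
    (hPorth : ∀ i j : ℕ, i + 2 ≤ n → j + 2 ≤ n →
        innerMu x W (P i) (P j) = if i = j then 1 else 0)
    (d : ℕ) (hd : d + 2 ≤ n) (Q : Polynomial (Matrix (Fin k) (Fin k) ℂ))
    (C : ℕ → Matrix (Fin k) (Fin k) ℂ)
    (hQ : Q = ∑ j ∈ Finset.range (d + 1), P j * Polynomial.C (C j))
    (i : ℕ) (hi : i ≤ d) : innerMu x W (P i) Q = C i := by
  rw [hQ, innerMu_sum_right]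
  have : ∀ j ∈ Finset.range (d + 1),
      innerMu x W (P i) (P j * Polynomial.C (C j)) = if i = j then C j else 0 := by
    intro j hj
    rw [Finset.mem_range] at hj
    rw [innerMu_mul_C_right, hPorth i j (by omega) (by omega)]
    split <;> simp
  rw [Finset.sum_congr rfl this, Finset.sum_ite_eq (Finset.range (d+1)) i C]
  simp [Nat.lt_succ_of_le hi]

lemma ortho_basis (hP0 : P 0 = 1)
    (hPdeg : ∀ j : ℕ, j + 2 ≤ n → (P j).natDegree = j)
    (hPorth : ∀ i j : ℕ, i + 2 ≤ n → j + 2 ≤ n →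
        innerMu x W (P i) (P j) = if i = j then 1 else 0) :
    ∀ d : ℕ, d + 2 ≤ n → IsUnit (P d).leadingCoeff ∧
      ∀ Q : Polynomial (Matrix (Fin k) (Fin k) ℂ), Q.natDegree ≤ d →
        ∃ C : ℕ → Matrix (Fin k) (Fin k) ℂ,
          Q = ∑ j ∈ Finset.range (d + 1), P j * Polynomial.C (C j) := by
  intro d
  induction d using Nat.strong_induction_on with
  | _ d IH =>
  intro hd
  have hunit : IsUnit (P d).leadingCoeff := by
    rcases Nat.eq_zero_or_eq_succ_pred d with h0 | hsucc
    · subst h0; rw [hP0]; simpa using isUnit_one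
    · set e := d - 1 with he
      have hde : d = e + 1 := hsucc
      have hIH := (IH e (by omega) (by omega)).2
      -- show det ≠ 0 via no nonzero kernel vector
      rw [Matrix.isUnit_iff_isUnit_det, isUnit_iff_ne_zero]
      intro hdet
      obtain ⟨v, hv, hLv⟩ := Matrix.exists_mulVec_eq_zero_iff.mpr hdet
      set M : Matrix (Fin k) (Fin k) ℂ := Matrix.of (fun i _ => v i) with hM
      have hLM : (P d).leadingCoeff * M = 0 := by
        ext i j
        have := congrFun hLv i
        simpa [Matrix.mul_apply, Matrix.mulVec, dotProduct, hM] using this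
      have hMne : M ≠ 0 := by
        intro h
        apply hv
        ext i
        have := congrFun (congrFun h i) ⟨0, by
          have : 0 < k := Fin.pos_iff_nonempty.mpr ⟨i⟩
          omega⟩
        simpa [hM] using this
      set Q : Polynomial (Matrix (Fin k) (Fin k) ℂ) := P d * Polynomial.C M with hQdef
      have hQdeg : Q.natDegree ≤ e := by
        rw [natDegree_le_iff_coeff_eq_zero]
        intro N hN
        rw [hQdef, coeff_mul_C]
        rcases eq_or_lt_of_le (Nat.succ_le_of_lt hN) with hNd | hNd
        · have hNd' : N = d := by omega
          have hc : (P d).coeff d = (P d).leadingCoeff := by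
            rw [Polynomial.leadingCoeff, hPdeg d hd]
          rw [hNd', hc, hLM]
        · rw [Polynomial.coeff_eq_zero_of_natDegree_lt (by rw [hPdeg d hd]; omega), zero_mul]
      obtain ⟨C, hC⟩ := hIH Q hQdeg
      have hCzero : ∀ i ≤ e, C i = 0 := by
        intro i hi
        have h1 := expansion_coeff x W P hPorth e (by omega) Q C hC i hi
        rw [hQdef, innerMu_mul_C_right, hPorth i d (by omega) hd] at h1
        rw [← h1]
        have : i ≠ d := by omega
        simp [this]
      have hQ0 : Q = 0 := by
        rw [hC]
        refine Finset.sum_eq_zero fun j hj => ?_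
        rw [Finset.mem_range] at hj
        rw [hCzero j (by omega)]
        simp
      have : Mᴴ * M = 0 := by
        have h2 : innerMu x W Q Q = Mᴴ * M := by
          rw [hQdef, innerMu_mul_C_right, innerMu_mul_C_left, hPorth d d hd hd]
          simp [Matrix.mul_assoc]
        rw [hQ0, innerMu_zero_left] at h2
        exact h2.symm
      exact hMne (Matrix.conjTranspose_mul_self_eq_zero.mp this)
  refine ⟨hunit, ?_⟩
  rcases Nat.eq_zero_or_eq_succ_pred d with h0 | hsucc
  · subst h0
    intro Q hQ
    refine ⟨fun _ => Q.coeff 0, ?_⟩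
    rw [Polynomial.eq_C_of_natDegree_le_zero hQ]
    simp [hP0]
  · set e := d - 1 with he
    have hde : d = e + 1 := hsucc
    have hIH := (IH e (by omega) (by omega)).2
    intro Q hQ
    set L := (P d).leadingCoeff with hL
    have hLdet : IsUnit L.det := (Matrix.isUnit_iff_isUnit_det L).mp hunit
    set N := L⁻¹ * Q.coeff d with hN
    set Q' := Q - P d * Polynomial.C N with hQ'
    have hQ'deg : Q'.natDegree ≤ e := by
      rw [natDegree_le_iff_coeff_eq_zero]
      intro M hM
      rw [hQ', Polynomial.coeff_sub, coeff_mul_C]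
      rcases eq_or_lt_of_le (Nat.succ_le_of_lt hM) with hMd | hMd
      · have hMd' : M = d := by omega
        have hc : (P d).coeff d = L := by rw [hL, Polynomial.leadingCoeff, hPdeg d hd]
        rw [hMd', hc, hN, ← Matrix.mul_assoc, Matrix.mul_nonsing_inv _ hLdet, Matrix.one_mul, sub_self]
      · rw [Polynomial.coeff_eq_zero_of_natDegree_lt (lt_of_le_of_lt hQ (by omega)),
          Polynomial.coeff_eq_zero_of_natDegree_lt (by rw [hPdeg d hd]; omega), zero_mul,
          sub_self]
    obtain ⟨C, hC⟩ := hIH Q' hQ'deg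
    refine ⟨fun j => if j = d then N else C j, ?_⟩
    rw [hde, Finset.sum_range_succ]
    have : ∀ j ∈ Finset.range (e + 1),
        P j * Polynomial.C (if j = e + 1 then N else C j) = P j * Polynomial.C (C j) := by
      intro j hj
      rw [Finset.mem_range] at hj
      have : j ≠ e + 1 := by omega
      simp [this, hde]
    rw [Finset.sum_congr rfl this, ← hC]
    simp only [← hde, eq_self_iff_true, if_true]
    rw [hQ', sub_add_cancel]
end MyAux

namespace MyAux

open scoped MatrixOrder in
lemma psd_decomp {k : ℕ} {S : Matrix (Fin k) (Fin k) ℂ} (hS : S.PosSemidef) :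
    ∃ A : Matrix (Fin k) (Fin k) ℂ, S = Aᴴ * A := by
  obtain ⟨a, ha⟩ := CStarAlgebra.nonneg_iff_eq_star_mul_self.mp hS.nonneg
  exact ⟨a, by rw [ha, star_eq_conjTranspose]⟩

lemma psd_col_zero {k : ℕ} {S : Matrix (Fin k) (Fin k) ℂ} (hS : S.PosSemidef)
    {j : Fin k} (hj : S j j = 0) : ∀ i, S i j = 0 := by
  obtain ⟨A, hA⟩ := psd_decomp hS
  have hv : (fun a => A a j) = 0 := by
    apply dotProduct_star_self_eq_zero.mp
    have : S j j = dotProduct (star fun a => A a j) (fun a => A a j) := by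
      rw [hA]
      simp [Matrix.mul_apply, dotProduct, Matrix.conjTranspose_apply]
    rw [← this, hj]
  intro i
  rw [hA]
  simp only [Matrix.mul_apply, Matrix.conjTranspose_apply]
  refine Finset.sum_eq_zero fun a _ => ?_
  have : A a j = 0 := congrFun hv a
  rw [this, mul_zero]

lemma psd_submatrix_succ {k : ℕ} {T : Matrix (Fin (k+1)) (Fin (k+1)) ℂ} (h : T.PosSemidef) :
    (T.submatrix Fin.succ Fin.succ).PosSemidef := by
  obtain ⟨C, hC⟩ := psd_decomp h
  have : T.submatrix Fin.succ Fin.succ =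
      (C.submatrix id Fin.succ)ᴴ * (C.submatrix id Fin.succ) := by
    ext i j
    simp [hC, Matrix.mul_apply, Matrix.conjTranspose_apply]
  rw [this]
  exact Matrix.posSemidef_conjTranspose_mul_self _

/-- Prepending a zero column preserves echelon form; moreover pivots stay positive. -/
lemma echelon_prepend {r k : ℕ} (B' : Matrix (Fin r) (Fin k) ℂ) (p : Fin r → Fin k)
    (hm : StrictMono p)
    (hp : ∀ i, (0 < (B' i (p i)).re ∧ (B' i (p i)).im = 0) ∧
      ∀ j : Fin k, (j : ℕ) < (p i : ℕ) → B' i j = 0) :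
    ∀ i, (0 < ((Matrix.of fun i (j : Fin (k+1)) =>
        (Fin.cases 0 (fun j' => B' i j') j : ℂ)) i ((p i).succ)).re ∧
        ((Matrix.of fun i (j : Fin (k+1)) =>
        (Fin.cases 0 (fun j' => B' i j') j : ℂ)) i ((p i).succ)).im = 0) ∧
      ∀ j : Fin (k+1), (j : ℕ) < ((p i).succ : ℕ) →
        (Matrix.of fun i (j : Fin (k+1)) =>
        (Fin.cases 0 (fun j' => B' i j') j : ℂ)) i j = 0 := by
  intro i
  constructor
  · simpa using (hp i).1
  · intro j hj
    rcases Fin.eq_zero_or_eq_succ j with h0 | ⟨j', rfl⟩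
    · subst h0; simp
    · simp only [Matrix.of_apply, Fin.cases_succ]
      exact (hp i).2 j' (by simpa [Fin.val_succ] using hj)

lemma prepend_mul {r k : ℕ} (B' : Matrix (Fin r) (Fin k) ℂ)
    (T : Matrix (Fin (k+1)) (Fin (k+1)) ℂ)
    (hrow : ∀ j, T 0 j = 0) (hcol : ∀ j, T j 0 = 0)
    (heq : B'ᴴ * B' = T.submatrix Fin.succ Fin.succ) :
    ((Matrix.of fun i (j : Fin (k+1)) => (Fin.cases 0 (fun j' => B' i j') j : ℂ))ᴴ *
      (Matrix.of fun i (j : Fin (k+1)) => (Fin.cases 0 (fun j' => B' i j') j : ℂ))) = T := by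
  ext j l
  rcases Fin.eq_zero_or_eq_succ j with h0 | ⟨j', rfl⟩
  · subst h0
    rw [hrow l]
    simp [Matrix.mul_apply, Matrix.conjTranspose_apply]
  · rcases Fin.eq_zero_or_eq_succ l with h0 | ⟨l', rfl⟩
    · subst h0
      rw [hcol _]
      simp [Matrix.mul_apply, Matrix.conjTranspose_apply]
    · have := congrFun (congrFun heq j') l'
      simp only [Matrix.mul_apply, Matrix.conjTranspose_apply, Matrix.submatrix_apply] at this ⊢
      simpa using this

/-- Existence of the echelon Cholesky factorization. -/
lemma chol_ex (k : ℕ) : ∀ (S : Matrix (Fin k) (Fin k) ℂ), S.PosSemidef →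
    ∃ (r : ℕ) (B : Matrix (Fin r) (Fin k) ℂ), RowEchelonPosPivots B ∧ S = Bᴴ * B := by
  induction k with
  | zero =>
    intro S _
    refine ⟨0, Matrix.of fun i _ => (i.elim0 : ℂ), ⟨Fin.elim0, fun a => a.elim0, fun i => i.elim0⟩, ?_⟩
    ext i j
    exact i.elim0
  | succ k IH =>
    intro S hS
    have hdiag : (0:ℂ) ≤ S 0 0 := by
      have := hS.dotProduct_mulVec_nonneg (Pi.single 0 1)
      have h1 : dotProduct (star (Pi.single 0 1 : Fin (k+1) → ℂ)) (S *ᵥ Pi.single 0 1) = S 0 0 := by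
        simp [Matrix.mulVec_single, dotProduct, Pi.single_apply]
      rwa [h1] at this
    have him : (S 0 0).im = 0 := by
      have := (Complex.le_def.mp hdiag).2
      simpa using this.symm
    have hre : 0 ≤ (S 0 0).re := by
      have := (Complex.le_def.mp hdiag).1
      simpa using this
    rcases eq_or_lt_of_le hre with hzero | hpos
    · -- S 0 0 = 0 : zero first row and column
      have hS00 : S 0 0 = 0 := by
        apply Complex.ext <;> simp [← hzero, him]
      have hcol : ∀ i, S i 0 = 0 := psd_col_zero hS hS00
      have hrow : ∀ j, S 0 j = 0 := by
        intro j
        have h2 := congrFun (congrFun hS.1.symm 0) j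
        rw [h2]
        simp [Matrix.conjTranspose_apply, hcol j]
      obtain ⟨r, B', hB'ech, hB'eq⟩ := IH (S.submatrix Fin.succ Fin.succ) (psd_submatrix_succ hS)
      obtain ⟨p, hm, hp⟩ := hB'ech
      refine ⟨r, Matrix.of fun i (j : Fin (k+1)) => (Fin.cases 0 (fun j' => B' i j') j : ℂ),
        ⟨fun i => (p i).succ, fun a b hab => Fin.succ_lt_succ_iff.mpr (hm hab),
          echelon_prepend B' p hm hp⟩, ?_⟩
      exact (prepend_mul B' S hrow hcol hB'eq.symm).symm
    · -- S 0 0 > 0 : pivot step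
      set s : ℝ := Real.sqrt ((S 0 0).re) with hsdef
      have hs : 0 < s := Real.sqrt_pos.mpr hpos
      have hss : ((s:ℂ)) * s = S 0 0 := by
        have h1 : S 0 0 = ((S 0 0).re : ℂ) := by apply Complex.ext <;> simp [him]
        rw [h1, ← Complex.ofReal_mul, Real.mul_self_sqrt hre]
      have hsne : (s:ℂ) ≠ 0 := Complex.ofReal_ne_zero.mpr hs.ne'
      obtain ⟨A, hA⟩ := psd_decomp hS
      set u : Fin (k+1) → ℂ := fun j => S 0 j / s with hu
      have hSrow : ∀ j, S 0 j = ∑ a, star (A a 0) * A a j := by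
        intro j; rw [hA]; simp [Matrix.mul_apply, Matrix.conjTranspose_apply]
      set U : Matrix (Fin 1) (Fin (k+1)) ℂ := Matrix.of fun _ j => u j with hU
      set g : Matrix (Fin (k+1)) (Fin 1) ℂ := Matrix.of fun a _ => A a 0 / s with hg
      have hgA : gᴴ * A = U := by
        ext i j
        simp only [Matrix.mul_apply, Matrix.conjTranspose_apply, hg, hU, Matrix.of_apply, hu]
        have h2 : ∀ a, star (A a 0 / (s:ℂ)) * A a j = (star (A a 0) * A a j) / s := by
          intro a
          rw [star_div₀, div_mul_eq_mul_div]
          congr 2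
          rw [Complex.star_def, Complex.conj_ofReal]
        rw [Finset.sum_congr rfl fun a _ => h2 a, ← Finset.sum_div, ← hSrow j]
      have hAg : Aᴴ * g = Uᴴ := by
        rw [← hgA, Matrix.conjTranspose_mul, Matrix.conjTranspose_conjTranspose]
      have hgg : gᴴ * g = 1 := by
        ext i j
        have hij : i = j := Subsingleton.elim i j
        subst hij
        simp only [Matrix.mul_apply, Matrix.conjTranspose_apply, hg, Matrix.of_apply,
          Matrix.one_apply_eq]
        have h2 : ∀ a, star (A a 0 / (s:ℂ)) * (A a 0 / s) = (star (A a 0) * A a 0) / ((s:ℂ)*s) := by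
          intro a
          rw [star_div₀, Complex.star_def, Complex.conj_ofReal]
          field_simp
        rw [Finset.sum_congr rfl fun a _ => h2 a, ← Finset.sum_div, ← hSrow 0, ← hss]
        field_simp
      set C := A - g * U with hC
      set T := S - Uᴴ * U with hT
      have hCT : Cᴴ * C = T := by
        rw [hT]
        have e1 : Aᴴ * (g * U) = Uᴴ * U := by rw [← Matrix.mul_assoc, hAg]
        have e2 : (g*U)ᴴ * A = Uᴴ * U := by
          rw [Matrix.conjTranspose_mul, Matrix.mul_assoc, hgA]
        have e3 : (g*U)ᴴ * (g*U) = Uᴴ * U := by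
          rw [Matrix.conjTranspose_mul, Matrix.mul_assoc, ← Matrix.mul_assoc gᴴ, hgg,
            Matrix.one_mul]
        rw [hC, Matrix.conjTranspose_sub, Matrix.sub_mul, Matrix.mul_sub, Matrix.mul_sub,
          e1, e2, e3, ← hA]
        abel
      have hTpsd : T.PosSemidef := by
        rw [← hCT]; exact Matrix.posSemidef_conjTranspose_mul_self C
      have hUU : ∀ i j, (Uᴴ * U) i j = star (u i) * u j := by
        intro i j
        simp [Matrix.mul_apply, Matrix.conjTranspose_apply, hU, Fin.sum_univ_one]
      have hu0 : u 0 = s := by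
        rw [hu]
        show S 0 0 / (s:ℂ) = s
        rw [← hss, mul_div_assoc, div_self hsne, mul_one]
      have hTrow : ∀ j, T 0 j = 0 := by
        intro j
        rw [hT]
        simp only [Matrix.sub_apply]
        rw [hUU, hu0, Complex.star_def, Complex.conj_ofReal, hu]
        show S 0 j - (s:ℂ) * (S 0 j / s) = 0
        rw [mul_div_cancel₀ _ hsne, sub_self]
      have hTcol : ∀ j, T j 0 = 0 := by
        intro j
        have h2 := congrFun (congrFun hTpsd.1.symm j) 0
        rw [h2]
        simp [Matrix.conjTranspose_apply, hTrow j]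
      obtain ⟨r, B', hB'ech, hB'eq⟩ := IH (T.submatrix Fin.succ Fin.succ) (psd_submatrix_succ hTpsd)
      obtain ⟨p, hm, hp⟩ := hB'ech
      refine ⟨r+1, Matrix.of fun i (j : Fin (k+1)) =>
        (Fin.cases (u j) (fun i' => (Fin.cases 0 (fun j' => B' i' j') j : ℂ)) i), ?_, ?_⟩
      · refine ⟨Fin.cases 0 (fun i' => (p i').succ), ?_, ?_⟩
        · intro a b hab
          induction b using Fin.cases with
          | zero => exact absurd hab (by simp [Fin.lt_def])
          | succ b' =>
            induction a using Fin.cases with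
            | zero =>
              simp only [Fin.cases_zero, Fin.cases_succ]
              exact Fin.succ_pos _
            | succ a' =>
              simp only [Fin.cases_succ]
              exact Fin.succ_lt_succ_iff.mpr (hm (by exact_mod_cast Fin.succ_lt_succ_iff.mp hab))
        · intro i
          induction i using Fin.cases with
          | zero =>
            refine ⟨?_, ?_⟩
            · simp only [Matrix.of_apply, Fin.cases_zero, hu0]
              simpa using hs
            · intro j hj
              exact absurd hj (by simp)
          | succ i' =>
            have h3 := echelon_prepend B' p hm hp i'
            simp only [Matrix.of_apply, Fin.cases_succ] at h3 ⊢
            exact h3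
      · have hBz := prepend_mul B' T hTrow hTcol hB'eq.symm
        ext j l
        rw [Matrix.mul_apply, Fin.sum_univ_succ]
        simp only [Matrix.conjTranspose_apply, Matrix.of_apply, Fin.cases_zero, Fin.cases_succ]
        have h2 := congrFun (congrFun hBz j) l
        simp only [Matrix.mul_apply, Matrix.conjTranspose_apply, Matrix.of_apply] at h2
        rw [h2, hT]
        simp only [Matrix.sub_apply]
        rw [hUU]
        ring

end MyAux

namespace MyAux

lemma echelon_dropcol {r k : ℕ} (B : Matrix (Fin r) (Fin (k+1)) ℂ) (p : Fin r → Fin (k+1))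
    (hm : StrictMono p)
    (hp : ∀ i, (0 < (B i (p i)).re ∧ (B i (p i)).im = 0) ∧
      ∀ j : Fin (k+1), (j:ℕ) < (p i:ℕ) → B i j = 0)
    (hge : ∀ i, 1 ≤ (p i : ℕ)) :
    RowEchelonPosPivots (B.submatrix id Fin.succ) := by
  refine ⟨fun i => ⟨(p i : ℕ) - 1, by have := (p i).isLt; have := hge i; omega⟩, ?_, ?_⟩
  · intro a b hab
    have h1 := hm hab
    have h2 := hge a
    simp only [Fin.lt_def] at h1 ⊢
    omega
  · intro i
    have hlt : (p i : ℕ) - 1 < k := by have := (p i).isLt; have := hge i; omega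
    have hsucc : Fin.succ (⟨(p i : ℕ) - 1, hlt⟩ : Fin k) = p i := by
      apply Fin.ext
      simp only [Fin.val_succ]
      have := hge i
      omega
    simp only [Matrix.submatrix_apply, id_eq]
    rw [hsucc]
    refine ⟨(hp i).1, ?_⟩
    intro j hj
    have hj' : (j : ℕ) < (p i : ℕ) - 1 := hj
    apply (hp i).2
    simp only [Fin.val_succ]
    omega

lemma chol_uniq (k : ℕ) : ∀ (r : ℕ) (B B' : Matrix (Fin r) (Fin k) ℂ),
    RowEchelonPosPivots B → RowEchelonPosPivots B' → Bᴴ * B = B'ᴴ * B' → B = B' := by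
  induction k with
  | zero =>
    intro r B B' _ _ _
    ext i j
    exact j.elim0
  | succ k IH =>
    intro r B B' hB hB' hS
    match r, B, B', hB, hB', hS with
    | 0, B, B', hB, hB', hS => ext i j; exact i.elim0
    | r₁ + 1, B, B', hB, hB', hS =>
    obtain ⟨p, hpm, hpp⟩ := hB
    obtain ⟨q, hqm, hqp⟩ := hB'
    have colB : ∀ i : Fin (r₁+1), i ≠ 0 → B i 0 = 0 := by
      intro i hi
      apply (hpp i).2
      have h0 : p 0 < p i := hpm (Fin.pos_of_ne_zero hi)
      simp only [Fin.lt_def] at h0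
      simp only [Fin.val_zero]
      omega
    have colB' : ∀ i : Fin (r₁+1), i ≠ 0 → B' i 0 = 0 := by
      intro i hi
      apply (hqp i).2
      have h0 : q 0 < q i := hqm (Fin.pos_of_ne_zero hi)
      simp only [Fin.lt_def] at h0
      simp only [Fin.val_zero]
      omega
    have hSB : (Bᴴ * B) 0 0 = star (B 0 0) * B 0 0 := by
      rw [Matrix.mul_apply]
      rw [Finset.sum_eq_single 0 (fun i _ hi => by
        rw [Matrix.conjTranspose_apply, colB i hi]; simp)
        (fun h => absurd (Finset.mem_univ _) h)]
      rfl
    have hSB' : (B'ᴴ * B') 0 0 = star (B' 0 0) * B' 0 0 := by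
      rw [Matrix.mul_apply]
      rw [Finset.sum_eq_single 0 (fun i _ hi => by
        rw [Matrix.conjTranspose_apply, colB' i hi]; simp)
        (fun h => absurd (Finset.mem_univ _) h)]
      rfl
    have entry_real : ∀ (M : Matrix (Fin (r₁+1)) (Fin (k+1)) ℂ) (pM : Fin (r₁+1) → Fin (k+1)),
        ((0 < (M 0 (pM 0)).re ∧ (M 0 (pM 0)).im = 0) ∧
          ∀ j : Fin (k+1), (j:ℕ) < (pM 0:ℕ) → M 0 j = 0) →
        (M 0 0).im = 0 ∧ 0 ≤ (M 0 0).re := by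
      intro M pM hM
      by_cases hp0 : (pM 0 : ℕ) = 0
      · have h1 : pM 0 = 0 := Fin.ext (by simpa using hp0)
        rw [h1] at hM
        exact ⟨hM.1.2, le_of_lt hM.1.1⟩
      · have h1 : M 0 0 = 0 := hM.2 0 (Nat.pos_of_ne_zero hp0)
        simp [h1]
    have hBr := entry_real B p (hpp 0)
    have hB'r := entry_real B' q (hqp 0)
    have hb : B 0 0 = ((B 0 0).re : ℂ) := Complex.ext rfl (by simp [hBr.1])
    have hb' : B' 0 0 = ((B' 0 0).re : ℂ) := Complex.ext rfl (by simp [hB'r.1])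
    have h00 : B 0 0 = B' 0 0 := by
      have e := congrFun (congrFun hS 0) 0
      rw [hSB, hSB'] at e
      rw [hb, hb'] at e
      simp only [Complex.star_def, Complex.conj_ofReal, ← Complex.ofReal_mul] at e
      have e2 : (B 0 0).re * (B 0 0).re = (B' 0 0).re * (B' 0 0).re :=
        Complex.ofReal_injective e
      have e3 := congrArg Real.sqrt e2
      rw [Real.sqrt_mul_self hBr.2, Real.sqrt_mul_self hB'r.2] at e3
      rw [hb, hb', e3]
    by_cases hz : B 0 0 = 0
    · -- zero pivot column case
      have hz' : B' 0 0 = 0 := by rw [← h00]; exact hz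
      have hcolB : ∀ i, B i 0 = 0 := by
        intro i
        rcases eq_or_ne i 0 with rfl | hi
        · exact hz
        · exact colB i hi
      have hcolB' : ∀ i, B' i 0 = 0 := by
        intro i
        rcases eq_or_ne i 0 with rfl | hi
        · exact hz'
        · exact colB' i hi
      have hge : ∀ i, 1 ≤ (p i : ℕ) := by
        intro i
        by_contra hcon
        have hp0 : (p i : ℕ) = 0 := by omega
        have : B i (p i) = 0 := by
          have h1 : p i = 0 := Fin.ext (by simpa using hp0)
          rw [h1]; exact hcolB i
        have := (hpp i).1.1
        rw [‹B i (p i) = 0›] at this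
        simp at this
      have hge' : ∀ i, 1 ≤ (q i : ℕ) := by
        intro i
        by_contra hcon
        have hp0 : (q i : ℕ) = 0 := by omega
        have : B' i (q i) = 0 := by
          have h1 : q i = 0 := Fin.ext (by simpa using hp0)
          rw [h1]; exact hcolB' i
        have := (hqp i).1.1
        rw [‹B' i (q i) = 0›] at this
        simp at this
      have hd := echelon_dropcol B p hpm hpp hge
      have hd' := echelon_dropcol B' q hqm hqp hge'
      have heq : (B.submatrix id Fin.succ)ᴴ * (B.submatrix id Fin.succ) =
          (B'.submatrix id Fin.succ)ᴴ * (B'.submatrix id Fin.succ) := by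
        ext j l
        have e := congrFun (congrFun hS j.succ) l.succ
        simp only [Matrix.mul_apply, Matrix.conjTranspose_apply, Matrix.submatrix_apply,
          id_eq] at e ⊢
        exact e
      have hsub := IH _ _ _ hd hd' heq
      ext i j
      rcases Fin.eq_zero_or_eq_succ j with rfl | ⟨j', rfl⟩
      · rw [hcolB i, hcolB' i]
      · exact congrFun (congrFun hsub i) j'
    · -- positive pivot case
      have hrow0 : ∀ j, B 0 j = B' 0 j := by
        intro j
        have e := congrFun (congrFun hS 0) j
        rw [Matrix.mul_apply, Matrix.mul_apply] at e
        rw [Finset.sum_eq_single 0 (fun i _ hi => by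
            rw [Matrix.conjTranspose_apply, colB i hi]; simp)
          (fun h => absurd (Finset.mem_univ _) h),
          Finset.sum_eq_single 0 (fun i _ hi => by
            rw [Matrix.conjTranspose_apply, colB' i hi]; simp)
          (fun h => absurd (Finset.mem_univ _) h)] at e
        rw [Matrix.conjTranspose_apply, Matrix.conjTranspose_apply, ← h00] at e
        exact mul_left_cancel₀ (star_ne_zero.mpr hz) e
      have hge₁ : ∀ i : Fin r₁, 1 ≤ (p i.succ : ℕ) := by
        intro i
        have h0 : p 0 < p i.succ := hpm (Fin.succ_pos i)
        simp only [Fin.lt_def] at h0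
        omega
      have hge₁' : ∀ i : Fin r₁, 1 ≤ (q i.succ : ℕ) := by
        intro i
        have h0 : q 0 < q i.succ := hqm (Fin.succ_pos i)
        simp only [Fin.lt_def] at h0
        omega
      have hp₁ : ∀ i : Fin r₁,
          (0 < ((B.submatrix Fin.succ id) i ((p ∘ Fin.succ) i)).re ∧
            ((B.submatrix Fin.succ id) i ((p ∘ Fin.succ) i)).im = 0) ∧
          ∀ j : Fin (k+1), (j:ℕ) < ((p ∘ Fin.succ) i:ℕ) → (B.submatrix Fin.succ id) i j = 0 := by
        intro i
        exact ⟨(hpp i.succ).1, fun j hj => (hpp i.succ).2 j hj⟩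
      have hq₁ : ∀ i : Fin r₁,
          (0 < ((B'.submatrix Fin.succ id) i ((q ∘ Fin.succ) i)).re ∧
            ((B'.submatrix Fin.succ id) i ((q ∘ Fin.succ) i)).im = 0) ∧
          ∀ j : Fin (k+1), (j:ℕ) < ((q ∘ Fin.succ) i:ℕ) → (B'.submatrix Fin.succ id) i j = 0 := by
        intro i
        exact ⟨(hqp i.succ).1, fun j hj => (hqp i.succ).2 j hj⟩
      have hpm₁ : StrictMono (p ∘ Fin.succ) := fun a b hab => hpm (Fin.succ_lt_succ_iff.mpr hab)
      have hqm₁ : StrictMono (q ∘ Fin.succ) := fun a b hab => hqm (Fin.succ_lt_succ_iff.mpr hab)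
      have heq₁ : (B.submatrix Fin.succ id)ᴴ * (B.submatrix Fin.succ id) =
          (B'.submatrix Fin.succ id)ᴴ * (B'.submatrix Fin.succ id) := by
        ext j l
        have e := congrFun (congrFun hS j) l
        rw [Matrix.mul_apply, Matrix.mul_apply, Fin.sum_univ_succ, Fin.sum_univ_succ] at e
        simp only [Matrix.conjTranspose_apply] at e
        rw [hrow0 j, hrow0 l] at e
        have e2 := add_left_cancel e
        simp only [Matrix.mul_apply, Matrix.conjTranspose_apply, Matrix.submatrix_apply, id_eq]
        exact e2
      have hd := echelon_dropcol (B.submatrix Fin.succ id) (p ∘ Fin.succ) hpm₁ hp₁ hge₁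
      have hd' := echelon_dropcol (B'.submatrix Fin.succ id) (q ∘ Fin.succ) hqm₁ hq₁ hge₁'
      have heq₂ : ((B.submatrix Fin.succ id).submatrix id Fin.succ)ᴴ *
          ((B.submatrix Fin.succ id).submatrix id Fin.succ) =
          ((B'.submatrix Fin.succ id).submatrix id Fin.succ)ᴴ *
          ((B'.submatrix Fin.succ id).submatrix id Fin.succ) := by
        ext j l
        have e := congrFun (congrFun heq₁ j.succ) l.succ
        simp only [Matrix.mul_apply, Matrix.conjTranspose_apply, Matrix.submatrix_apply,
          id_eq] at e ⊢
        exact e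
      have hsub := IH _ _ _ hd hd' heq₂
      ext i j
      rcases Fin.eq_zero_or_eq_succ i with rfl | ⟨i', rfl⟩
      · exact hrow0 j
      · rcases Fin.eq_zero_or_eq_succ j with rfl | ⟨j', rfl⟩
        · rw [colB _ (Fin.succ_ne_zero i'), colB' _ (Fin.succ_ne_zero i')]
        · exact congrFun (congrFun hsub i') j'

end MyAux

namespace MyAux

lemma echelon_unit_sub {r k : ℕ} (B : Matrix (Fin r) (Fin k) ℂ)
    (hB : RowEchelonPosPivots B) : ∃ E : Matrix (Fin k) (Fin r) ℂ, IsUnit (B * E) := by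
  obtain ⟨p, hm, hp⟩ := hB
  refine ⟨Matrix.of fun a b => if a = p b then 1 else 0, ?_⟩
  have hT : B * (Matrix.of fun a b => if a = p b then (1:ℂ) else 0) =
      Matrix.of fun i j => B i (p j) := by
    ext i j
    simp [Matrix.mul_apply, mul_ite, mul_one, mul_zero, Finset.sum_ite_eq']
  rw [hT, Matrix.isUnit_iff_isUnit_det, isUnit_iff_ne_zero]
  have htri : Matrix.BlockTriangular (Matrix.of fun i j => B i (p j)) id := by
    intro i j hij
    exact (hp i).2 (p j) (hm hij)
  rw [Matrix.det_of_upperTriangular htri]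
  rw [Finset.prod_ne_zero_iff]
  intro i _
  intro h
  have := (hp i).1.1
  rw [Matrix.of_apply] at h
  rw [h] at this
  simp at this

lemma echelon_rank {r k : ℕ} (B : Matrix (Fin r) (Fin k) ℂ)
    (hB : RowEchelonPosPivots B) : B.rank = r := by
  obtain ⟨E, hE⟩ := echelon_unit_sub B hB
  refine le_antisymm (B.rank_le_height) ?_
  have h1 := Matrix.rank_of_isUnit _ hE
  rw [Fintype.card_fin] at h1
  calc r = (B * E).rank := h1.symm
    _ ≤ B.rank := Matrix.rank_mul_le_left B E

lemma echelon_vecMul_eq_zero {r k : ℕ} (B : Matrix (Fin r) (Fin k) ℂ)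
    (hB : RowEchelonPosPivots B) (u : Fin r → ℂ) (h : u ᵥ* B = 0) : u = 0 := by
  obtain ⟨E, hE⟩ := echelon_unit_sub B hB
  have h2 : u ᵥ* (B * E) = 0 := by
    rw [← Matrix.vecMul_vecMul, h, Matrix.zero_vecMul]
  have hdet := (Matrix.isUnit_iff_isUnit_det _).mp hE
  have h3 := congrArg (fun z => z ᵥ* (B * E)⁻¹) h2
  simpa [Matrix.vecMul_vecMul, Matrix.mul_nonsing_inv _ hdet, Matrix.vecMul_one,
    Matrix.zero_vecMul] using h3

lemma echelon_BBH_isUnit {r k : ℕ} (B : Matrix (Fin r) (Fin k) ℂ)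
    (hB : RowEchelonPosPivots B) : IsUnit (B * Bᴴ) := by
  rw [Matrix.isUnit_iff_isUnit_det, isUnit_iff_ne_zero]
  intro hdet
  obtain ⟨v, hv, hBv⟩ := Matrix.exists_mulVec_eq_zero_iff.mpr hdet
  have h1 : B *ᵥ (Bᴴ *ᵥ v) = 0 := by
    rw [Matrix.mulVec_mulVec, hBv]
  have h2 : star (Bᴴ *ᵥ v) ⬝ᵥ (Bᴴ *ᵥ v) = 0 := by
    rw [Matrix.star_mulVec, Matrix.conjTranspose_conjTranspose, ← Matrix.dotProduct_mulVec,
      h1, dotProduct_zero]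
  have h3 : Bᴴ *ᵥ v = 0 := dotProduct_star_self_eq_zero.mp h2
  have h4 : star v ᵥ* B = 0 := by
    rw [← Matrix.conjTranspose_conjTranspose B, ← Matrix.star_mulVec, h3, star_zero]
  have h5 := echelon_vecMul_eq_zero B hB (star v) h4
  exact hv (star_eq_zero.mp h5)

end MyAux

namespace MyAux

lemma psd_zero {k : ℕ} : (0 : Matrix (Fin k) (Fin k) ℂ).PosSemidef :=
  ⟨Matrix.isHermitian_zero, fun v => by simp⟩

lemma psd_add {k : ℕ} {A B : Matrix (Fin k) (Fin k) ℂ} (hA : A.PosSemidef)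
    (hB : B.PosSemidef) : (A + B).PosSemidef :=
  hA.add hB

lemma psd_sum {ι k : ℕ} (s : Finset (Fin ι)) (f : Fin ι → Matrix (Fin k) (Fin k) ℂ)
    (h : ∀ i ∈ s, (f i).PosSemidef) : (∑ i ∈ s, f i).PosSemidef := by
  classical
  induction s using Finset.induction_on with
  | empty => simpa using psd_zero
  | insert _ _ hne ih =>
    rw [Finset.sum_insert hne]
    exact psd_add (h _ (Finset.mem_insert_self _ _))
      (ih fun i hi => h i (Finset.mem_insert_of_mem hi))

lemma natDegree_X_mul_le {k : ℕ} (R : Polynomial (Matrix (Fin k) (Fin k) ℂ)) :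
    (X * R).natDegree ≤ R.natDegree + 1 := by
  rw [natDegree_le_iff_coeff_eq_zero]
  intro N hN
  match N, hN with
  | M + 1, hN =>
    rw [Polynomial.coeff_X_mul]
    exact Polynomial.coeff_eq_zero_of_natDegree_lt (by omega)

lemma coeff_X_mul' {k : ℕ} (R : Polynomial (Matrix (Fin k) (Fin k) ℂ)) (N : ℕ) (hN : 1 ≤ N) :
    (X * R).coeff N = R.coeff (N - 1) := by
  match N, hN with
  | M + 1, _ => rw [Polynomial.coeff_X_mul, Nat.add_sub_cancel]

lemma innerMu_sum_left {k m : ℕ} (x : Fin m → ℝ) (W : Fin m → Matrix (Fin k) (Fin k) ℂ)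
    {ι : Type*} (s : Finset ι) (Q : ι → Polynomial (Matrix (Fin k) (Fin k) ℂ))
    (P : Polynomial (Matrix (Fin k) (Fin k) ℂ)) :
    innerMu x W (∑ i ∈ s, Q i) P = ∑ i ∈ s, innerMu x W (Q i) P := by
  classical
  induction s using Finset.induction_on with
  | empty => simp [innerMu]
  | insert _ _ hne ih =>
    rw [Finset.sum_insert hne, Finset.sum_insert hne, ← ih]
    simp only [innerMu, eval_add, Matrix.conjTranspose_add, Matrix.add_mul,
      Finset.sum_add_distrib]

lemma innerFun_const_left {k m a b c : ℕ} (x : Fin m → ℝ)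
    (W : Fin m → Matrix (Fin k) (Fin k) ℂ) (F : ℝ → Matrix (Fin k) (Fin a) ℂ)
    (K : Matrix (Fin a) (Fin c) ℂ) (G : ℝ → Matrix (Fin k) (Fin b) ℂ) :
    innerFun x W (fun t => F t * K) G = Kᴴ * innerFun x W F G := by
  simp only [innerFun, Matrix.conjTranspose_mul, Matrix.mul_assoc]
  rw [← Matrix.mul_sum]

lemma innerFun_const_right {k m a b c : ℕ} (x : Fin m → ℝ)
    (W : Fin m → Matrix (Fin k) (Fin k) ℂ) (F : ℝ → Matrix (Fin k) (Fin a) ℂ)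
    (K : Matrix (Fin b) (Fin c) ℂ) (G : ℝ → Matrix (Fin k) (Fin b) ℂ) :
    innerFun x W F (fun t => G t * K) = innerFun x W F G * K := by
  simp only [innerFun]
  rw [Matrix.sum_mul]
  exact Finset.sum_congr rfl fun j _ => (Matrix.mul_assoc _ _ _).symm

end MyAux


open MyAux

/-- Construction of the last orthonormal polynomial `P_{n-1}`:
with `P(x) = x P_{n-2}(x) - P_{n-2}(x) A_{n-2} - P_{n-3}(x) B_{n-3}^*`, (i) there is a
unique `B_{n-2} ∈ ℂ^{(k-ℓ)×k}` in row echelon form with positive pivots with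
`⟨P,P⟩_μ = B_{n-2}^* B_{n-2}`; (ii) `P_{n-1}(x) = P(x) B_{n-2}^* (B_{n-2} B_{n-2}^*)⁻¹`
is orthonormal: `⟨P_{n-1},P_j⟩_μ = 0` for `j < n-1`, `⟨P_{n-1},P_{n-1}⟩_μ = I`, and
`⟨P_{n-1}, x P_{n-2}(x)⟩_μ = B_{n-2}`. -/
theorem last_orthonormal_polynomial
    (k m n ℓ : ℕ) (hk : 1 ≤ k) (hn : 2 ≤ n) (hℓ : ℓ < k)
    (x : Fin m → ℝ) (hx : Function.Injective x)
    (W : Fin m → Matrix (Fin k) (Fin k) ℂ)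
    (hW : ∀ j, (W j).PosSemidef) (hsum : ∑ j, W j = 1)
    (hdef : NDefinite n x W)
    (hrank : ∀ Pm : Polynomial (Matrix (Fin k) (Fin k) ℂ),
        IsMonicOrth x W (n - 1) Pm → (innerMu x W Pm Pm).rank = k - ℓ)
    (P : ℕ → Polynomial (Matrix (Fin k) (Fin k) ℂ))
    (hP0 : P 0 = 1)
    (hPdeg : ∀ j : ℕ, j + 2 ≤ n → (P j).natDegree = j)
    (hPorth : ∀ i j : ℕ, i + 2 ≤ n → j + 2 ≤ n →
        innerMu x W (P i) (P j) = if i = j then 1 else 0)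
    (hPB : ∀ j : ℕ, j + 3 ≤ n → UpperTriPosDiag (innerMu x W (P (j + 1)) (X * P j)))
    (Pp : Polynomial (Matrix (Fin k) (Fin k) ℂ))
    (hPp : Pp = X * P (n - 2)
        - P (n - 2) * Polynomial.C (innerMu x W (P (n - 2)) (X * P (n - 2)))
        - (if n = 2 then 0
            else P (n - 3) * Polynomial.C ((innerMu x W (P (n - 2)) (X * P (n - 3)))ᴴ))) :
    (∃! B : Matrix (Fin (k - ℓ)) (Fin k) ℂ,
        RowEchelonPosPivots B ∧ innerFun x W (pev Pp) (pev Pp) = Bᴴ * B) ∧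
    (∀ B : Matrix (Fin (k - ℓ)) (Fin k) ℂ,
        RowEchelonPosPivots B → innerFun x W (pev Pp) (pev Pp) = Bᴴ * B →
        (∀ j : ℕ, j + 2 ≤ n →
            innerFun x W (fun t => pev Pp t * (Bᴴ * (B * Bᴴ)⁻¹)) (pev (P j)) = 0) ∧
        innerFun x W (fun t => pev Pp t * (Bᴴ * (B * Bᴴ)⁻¹))
            (fun t => pev Pp t * (Bᴴ * (B * Bᴴ)⁻¹)) = 1 ∧
        innerFun x W (fun t => pev Pp t * (Bᴴ * (B * Bᴴ)⁻¹))
            (pev (X * P (n - 2))) = B) := by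
  classical
  have hd2 : (n - 2) + 2 ≤ n := by omega
  have hBASIS := ortho_basis x W P hP0 hPdeg hPorth
  -- orthogonality of Pp against the P j
  have horth : ∀ j, j + 2 ≤ n → innerMu x W (P j) Pp = 0 := by
    intro j hj
    rw [hPp, innerMu_sub_right, innerMu_sub_right, innerMu_mul_C_right]
    by_cases hc1 : j = n - 2
    · subst hc1
      rw [hPorth _ _ hj hj, if_pos rfl, Matrix.one_mul]
      have h3 : innerMu x W (P (n-2)) (if n = 2 then 0
          else P (n - 3) * Polynomial.C ((innerMu x W (P (n - 2)) (X * P (n - 3)))ᴴ)) = 0 := by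
        split
        · exact innerMu_zero_right x W _
        · next hn2 =>
          rw [innerMu_mul_C_right, hPorth _ _ hj (by omega), if_neg (by omega), Matrix.zero_mul]
      rw [h3, sub_zero, sub_self]
    · by_cases hc2 : j = n - 3
      · have hn3 : 3 ≤ n := by omega
        subst hc2
        have e1 : innerMu x W (P (n-3)) (X * P (n-2)) =
            (innerMu x W (P (n-2)) (X * P (n-3)))ᴴ := by
          rw [innerMu_X_comm x W hW, ← innerMu_conj x W hW]
        rw [e1, hPorth _ _ hj hd2, if_neg (by omega), Matrix.zero_mul, sub_zero]
        rw [if_neg (show ¬ n = 2 by omega), innerMu_mul_C_right,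
          hPorth _ _ hj hj, if_pos rfl, Matrix.one_mul, sub_self]
      · have hj4 : j + 4 ≤ n := by omega
        obtain ⟨C, hC⟩ := (hBASIS (j+1) (by omega)).2 (X * P j)
          ((natDegree_X_mul_le (P j)).trans (by rw [hPdeg j hj]))
        have e1 : innerMu x W (P (n-2)) (X * P j) = 0 := by
          rw [hC, innerMu_sum_right]
          refine Finset.sum_eq_zero fun i hi => ?_
          rw [Finset.mem_range] at hi
          rw [innerMu_mul_C_right, hPorth _ _ hd2 (by omega), if_neg (by omega),
            Matrix.zero_mul]
        have e2 : innerMu x W (P j) (X * P (n-2)) = 0 := by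
          rw [innerMu_X_comm x W hW, ← innerMu_conj x W hW, e1, Matrix.conjTranspose_zero]
        rw [e2, hPorth _ _ hj hd2, if_neg hc1, Matrix.zero_mul, sub_zero, zero_sub, neg_eq_zero]
        rw [if_neg (show ¬ n = 2 by omega), innerMu_mul_C_right,
          hPorth _ _ hj (by omega), if_neg hc2, Matrix.zero_mul]
  -- positive semidefiniteness of the Gram matrix
  have hSpsd : (innerMu x W Pp Pp).PosSemidef := by
    unfold innerMu
    exact psd_sum Finset.univ _ fun j _ => (hW j).conjTranspose_mul_mul_same _
  -- leading coefficient facts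
  have hLunit : IsUnit (P (n-2)).leadingCoeff := (hBASIS (n-2) hd2).1
  have hLdet : IsUnit (P (n-2)).leadingCoeff.det :=
    (Matrix.isUnit_iff_isUnit_det _).mp hLunit
  have hLne : (P (n-2)).leadingCoeff ≠ 0 := by
    intro h0
    haveI : Nonempty (Fin k) := ⟨⟨0, hk⟩⟩
    rw [h0, Matrix.det_zero] at hLdet
    simp at hLdet
  have hcoeffs : ∀ N, n - 2 < N → (Pp.coeff N =
      if N = n - 1 then (P (n-2)).leadingCoeff else 0) := by
    intro N hN
    have c1 : (X * P (n-2)).coeff N = (P (n-2)).coeff (N - 1) :=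
      coeff_X_mul' _ _ (by omega)
    have c2 : (P (n - 2) * Polynomial.C (innerMu x W (P (n - 2)) (X * P (n - 2)))).coeff N
        = 0 := by
      rw [Polynomial.coeff_mul_C, Polynomial.coeff_eq_zero_of_natDegree_lt
        (show (P (n-2)).natDegree < N by rw [hPdeg _ hd2]; omega), zero_mul]
    have c3 : (if n = 2 then (0 : Polynomial (Matrix (Fin k) (Fin k) ℂ))
        else P (n - 3) * Polynomial.C ((innerMu x W (P (n - 2)) (X * P (n - 3)))ᴴ)).coeff
          N = 0 := by
      split
      · simp
      · rw [Polynomial.coeff_mul_C, Polynomial.coeff_eq_zero_of_natDegree_lt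
          (show (P (n-3)).natDegree < N by rw [hPdeg _ (by omega)]; omega), zero_mul]
    rw [hPp]
    simp only [Polynomial.coeff_sub]
    rw [c1, c2, c3, sub_zero, sub_zero]
    by_cases hN1 : N = n - 1
    · rw [if_pos hN1, hN1, show n - 1 - 1 = n - 2 by omega, Polynomial.leadingCoeff,
        hPdeg _ hd2]
    · rw [if_neg hN1, Polynomial.coeff_eq_zero_of_natDegree_lt
        (show (P (n-2)).natDegree < N - 1 by rw [hPdeg _ hd2]; omega)]
  have hPtop : Pp.coeff (n-1) = (P (n-2)).leadingCoeff := by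
    rw [hcoeffs (n-1) (by omega), if_pos rfl]
  have hPhigh : ∀ N, n - 1 < N → Pp.coeff N = 0 := by
    intro N hN
    rw [hcoeffs N (by omega), if_neg (by omega)]
  -- the monic orthogonal polynomial of degree n-1
  have hPi_top : (Pp * Polynomial.C ((P (n-2)).leadingCoeff)⁻¹).coeff (n-1) = 1 := by
    rw [Polynomial.coeff_mul_C, hPtop, Matrix.mul_nonsing_inv _ hLdet]
  have hPi_high : ∀ N, n - 1 < N →
      (Pp * Polynomial.C ((P (n-2)).leadingCoeff)⁻¹).coeff N = 0 := by
    intro N hN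
    rw [Polynomial.coeff_mul_C, hPhigh N hN, zero_mul]
  have hone : (1 : Matrix (Fin k) (Fin k) ℂ) ≠ 0 := by
    intro h
    have := congrFun (congrFun h ⟨0, hk⟩) ⟨0, hk⟩
    simp [Matrix.one_apply] at this
  have hPi_deg : (Pp * Polynomial.C ((P (n-2)).leadingCoeff)⁻¹).natDegree = n - 1 := by
    refine le_antisymm (natDegree_le_iff_coeff_eq_zero.mpr fun N hN => hPi_high N hN) ?_
    apply Polynomial.le_natDegree_of_ne_zero
    rw [hPi_top]
    exact hone
  have hPi_monic : (Pp * Polynomial.C ((P (n-2)).leadingCoeff)⁻¹).Monic := by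
    have h1 : (Pp * Polynomial.C ((P (n-2)).leadingCoeff)⁻¹).leadingCoeff = 1 := by
      rw [Polynomial.leadingCoeff, hPi_deg]
      exact hPi_top
    exact h1
  have hPi_orth : ∀ Q : Polynomial (Matrix (Fin k) (Fin k) ℂ), Q.natDegree < n - 1 →
      innerMu x W Q (Pp * Polynomial.C ((P (n-2)).leadingCoeff)⁻¹) = 0 := by
    intro Q hQ
    have hz : innerMu x W Q Pp = 0 := by
      obtain ⟨C, hC⟩ := (hBASIS (n-2) hd2).2 Q (by omega)
      rw [hC, innerMu_sum_left]
      refine Finset.sum_eq_zero fun i hi => ?_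
      rw [Finset.mem_range] at hi
      rw [innerMu_mul_C_left, horth i (by omega), Matrix.mul_zero]
    rw [innerMu_mul_C_right, hz, Matrix.zero_mul]
  have hrankS : (innerMu x W Pp Pp).rank = k - ℓ := by
    have h1 := hrank _ ⟨hPi_monic, hPi_deg, hPi_orth⟩
    rw [innerMu_mul_C_right, innerMu_mul_C_left] at h1
    rw [Matrix.rank_mul_eq_left_of_isUnit_det _ _ (Matrix.isUnit_nonsing_inv_det _ hLdet)] at h1
    rw [Matrix.rank_mul_eq_right_of_isUnit_det _ _ (by
      rw [Matrix.det_conjTranspose]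
      exact (Matrix.isUnit_nonsing_inv_det _ hLdet).star)] at h1
    exact h1
  -- existence and uniqueness of B
  have hmain : ∃! B : Matrix (Fin (k - ℓ)) (Fin k) ℂ,
      RowEchelonPosPivots B ∧ innerFun x W (pev Pp) (pev Pp) = Bᴴ * B := by
    obtain ⟨r, B0, hB0e, hB0eq⟩ := chol_ex k (innerMu x W Pp Pp) hSpsd
    have hr : r = k - ℓ := by
      have h2 : (innerMu x W Pp Pp).rank = r := by
        rw [hB0eq, Matrix.rank_conjTranspose_mul_self, echelon_rank B0 hB0e]
      rw [h2] at hrankS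
      exact hrankS
    subst hr
    refine ⟨B0, ⟨hB0e, hB0eq⟩, ?_⟩
    intro B hB
    exact chol_uniq (k := k) _ B B0 hB.1 hB0e (by rw [← hB.2]; exact hB0eq)
  refine ⟨hmain, ?_⟩
  intro B hBech hBeq
  have hBeq' : innerMu x W Pp Pp = Bᴴ * B := hBeq
  have hUdet := (Matrix.isUnit_iff_isUnit_det _).mp (echelon_BBH_isUnit B hBech)
  have hKconj : (Bᴴ * (B * Bᴴ)⁻¹)ᴴ = (B * Bᴴ)⁻¹ * B := by
    rw [Matrix.conjTranspose_mul, Matrix.conjTranspose_nonsing_inv, Matrix.conjTranspose_mul,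
      Matrix.conjTranspose_conjTranspose]
  refine ⟨?_, ?_, ?_⟩
  · intro j hj
    rw [innerFun_const_left, hKconj]
    have hz : innerFun x W (pev Pp) (pev (P j)) = (0 : Matrix (Fin k) (Fin k) ℂ) := by
      show innerMu x W Pp (P j) = 0
      rw [← innerMu_conj x W hW, horth j hj, Matrix.conjTranspose_zero]
    rw [hz, Matrix.mul_zero]
  · rw [innerFun_const_left, innerFun_const_right, hKconj]
    have hz : innerFun x W (pev Pp) (pev Pp) = Bᴴ * B := hBeq
    rw [hz]
    have e : Bᴴ * B * (Bᴴ * (B * Bᴴ)⁻¹) = Bᴴ := by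
      rw [Matrix.mul_assoc, ← Matrix.mul_assoc B Bᴴ, Matrix.mul_nonsing_inv _ hUdet,
        Matrix.mul_one]
    rw [e, Matrix.mul_assoc, Matrix.nonsing_inv_mul _ hUdet]
  · rw [innerFun_const_left, hKconj]
    have hXPp : innerMu x W Pp (X * P (n-2)) = innerMu x W Pp Pp := by
      have hsplit : X * P (n - 2) = Pp +
          (P (n - 2) * Polynomial.C (innerMu x W (P (n - 2)) (X * P (n - 2))) +
          (if n = 2 then 0
            else P (n - 3) * Polynomial.C ((innerMu x W (P (n - 2)) (X * P (n - 3)))ᴴ))) := by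
        rw [hPp]
        abel
      rw [hsplit, innerMu_add_right, innerMu_add_right, innerMu_mul_C_right]
      have hz1 : innerMu x W Pp (P (n-2)) = 0 := by
        rw [← innerMu_conj x W hW, horth _ hd2, Matrix.conjTranspose_zero]
      have hz2 : innerMu x W Pp (if n = 2 then 0
          else P (n - 3) * Polynomial.C ((innerMu x W (P (n - 2)) (X * P (n - 3)))ᴴ)) = 0 := by
        split
        · exact innerMu_zero_right x W Pp
        · rw [innerMu_mul_C_right]
          have hz3 : innerMu x W Pp (P (n-3)) = 0 := by
            rw [← innerMu_conj x W hW, horth _ (by omega), Matrix.conjTranspose_zero]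
          rw [hz3, Matrix.zero_mul]
      rw [hz1, hz2, Matrix.zero_mul, add_zero, add_zero]
    have hpe : innerFun x W (pev Pp) (pev (X * P (n-2))) = innerMu x W Pp (X * P (n-2)) := rfl
    rw [hpe, hXPp, hBeq']
    rw [Matrix.mul_assoc, ← Matrix.mul_assoc B Bᴴ B, ← Matrix.mul_assoc,
      Matrix.nonsing_inv_mul _ hUdet, Matrix.one_mul]

end
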